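/- Let (x_m)_{m≥0} be the k-averaging process on ℝ^n with n > k ≥ 2, started from a deterministic vector x_0 with ∑_{i=1}^n x_{0,i} = 0, and let S_n(l) = ∑_{i=1}^n x_{l,i}². With τ = 1 − (k−1)/(n−1), for every l ≥ 0 one has E[S_n(l)] = τ^l · S_n(0). -/

import Mathlib

open MeasureTheory ProbabilityTheory Filter

noncomputable section

instance (α : Type*) : MeasurableSpace (Finset α) := ⊤

/-- One averaging step: replace all coordinates in `A` by their average. -/
def avgStep {n : ℕ} (k : ℕ) (A : Finset (Fin n)) (x : Fin n → ℝ) : Fin n → ℝ :=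
  fun i => if i ∈ A then (∑ j ∈ A, x j) / k else x i

/-- The `k`-averaging process driven by the sequence of chosen subsets `A · ω`. -/
def proc {Ω : Type*} {n : ℕ} (k : ℕ) (x0 : Fin n → ℝ) (A : ℕ → Ω → Finset (Fin n))
    (ω : Ω) : ℕ → Fin n → ℝ
  | 0 => x0
  | m + 1 => avgStep k (A m ω) (proc k x0 A ω m)

/- ### Auxiliary material -/

instance (α : Type*) : MeasurableSingletonClass (Finset α) := ⟨fun _ => trivial⟩

open Finset

section Comb

variable {n k : ℕ}

lemma card_filter_mem' (hk1 : 1 ≤ k) (i : Fin n) :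
    ((powersetCard k (univ : Finset (Fin n))).filter (fun s => i ∈ s)).card
      = (n - 1).choose (k - 1) := by
  have : ((powersetCard k (univ : Finset (Fin n))).filter (fun s => i ∈ s)).card
      = (powersetCard (k - 1) ((univ : Finset (Fin n)).erase i)).card := by
    apply Finset.card_nbij' (fun s => s.erase i) (fun t => insert i t)
    · intro s hs
      simp only [Finset.mem_coe, mem_filter, mem_powersetCard] at hs
      simp only [Finset.mem_coe, mem_powersetCard]
      refine ⟨fun x hx => ?_, ?_⟩
      · simp only [mem_erase] at hx ⊢
        exact ⟨hx.1, mem_univ _⟩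
      · rw [card_erase_of_mem hs.2, hs.1.2]
    · intro t ht
      simp only [Finset.mem_coe, mem_powersetCard] at ht
      simp only [Finset.mem_coe, mem_filter, mem_powersetCard]
      have hi : i ∉ t := fun h => (mem_erase.1 (ht.1 h)).1 rfl
      refine ⟨⟨subset_univ _, ?_⟩, mem_insert_self _ _⟩
      rw [card_insert_of_notMem hi, ht.2]
      omega
    · intro s hs
      simp only [Finset.mem_coe, mem_filter] at hs
      exact insert_erase hs.2
    · intro t ht
      simp only [Finset.mem_coe, mem_powersetCard] at ht
      have hi : i ∉ t := fun h => (mem_erase.1 (ht.1 h)).1 rfl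
      exact erase_insert hi
  rw [this, card_powersetCard, card_erase_of_mem (mem_univ _), card_univ, Fintype.card_fin]

lemma card_filter_pair' (hk : 2 ≤ k) (i j : Fin n) (hij : i ≠ j) :
    ((powersetCard k (univ : Finset (Fin n))).filter (fun s => i ∈ s ∧ j ∈ s)).card
      = (n - 2).choose (k - 2) := by
  have : ((powersetCard k (univ : Finset (Fin n))).filter (fun s => i ∈ s ∧ j ∈ s)).card
      = (powersetCard (k - 2) (((univ : Finset (Fin n)).erase i).erase j)).card := by
    apply Finset.card_nbij' (fun s => (s.erase i).erase j) (fun t => insert i (insert j t))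
    · intro s hs
      simp only [Finset.mem_coe, mem_filter, mem_powersetCard] at hs
      simp only [Finset.mem_coe, mem_powersetCard]
      refine ⟨fun x hx => ?_, ?_⟩
      · simp only [mem_erase] at hx ⊢
        exact ⟨hx.1, hx.2.1, mem_univ _⟩
      · rw [card_erase_of_mem (mem_erase.2 ⟨hij.symm, hs.2.2⟩), card_erase_of_mem hs.2.1, hs.1.2]
        omega
    · intro t ht
      simp only [Finset.mem_coe, mem_powersetCard] at ht
      have hjt : j ∉ t := fun h => by
            have := ht.1 h; simp only [mem_erase] at this; exact this.1 rfl
      have hit : i ∉ t := fun h => by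
            have := ht.1 h; simp only [mem_erase] at this; exact this.2.1 rfl
      simp only [Finset.mem_coe, mem_filter, mem_powersetCard]
      refine ⟨⟨subset_univ _, ?_⟩, mem_insert_self _ _, mem_insert_of_mem (mem_insert_self _ _)⟩
      rw [card_insert_of_notMem (by simp [hij, hit]), card_insert_of_notMem hjt, ht.2]
      omega
    · intro s hs
      simp only [Finset.mem_coe, mem_filter] at hs
      dsimp only
      rw [insert_erase (mem_erase.2 ⟨hij.symm, hs.2.2⟩), insert_erase hs.2.1]
    · intro t ht
      simp only [Finset.mem_coe, mem_powersetCard] at ht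
      have hjt : j ∉ t := fun h => by
            have := ht.1 h; simp only [mem_erase] at this; exact this.1 rfl
      have hit : i ∉ t := fun h => by
            have := ht.1 h; simp only [mem_erase] at this; exact this.2.1 rfl
      dsimp only
      rw [erase_insert (by simp [hij, hit]), erase_insert hjt]
  rw [this, card_powersetCard, card_erase_of_mem (mem_erase.2 ⟨hij.symm, mem_univ _⟩),
    card_erase_of_mem (mem_univ _), card_univ, Fintype.card_fin, Nat.sub_sub]

lemma sum_sq_subset' (hk : 2 ≤ k) (y : Fin n → ℝ) :
    ∑ s ∈ powersetCard k (univ : Finset (Fin n)), (∑ j ∈ s, y j) ^ 2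
      = ((n - 1).choose (k - 1) : ℝ) * ∑ i, y i ^ 2
        + ((n - 2).choose (k - 2) : ℝ) * ((∑ i, y i) ^ 2 - ∑ i, y i ^ 2) := by
  have h1 : ∀ s : Finset (Fin n), (∑ j ∈ s, y j) ^ 2
      = ∑ i, ∑ j, (if i ∈ s ∧ j ∈ s then y i * y j else 0) := by
    intro s
    rw [sq, Finset.sum_mul_sum]
    symm
    simp [ite_and, Finset.sum_ite_mem, Finset.univ_inter]
  rw [Finset.sum_congr rfl (fun s _ => h1 s)]
  rw [Finset.sum_comm]
  have h2 : ∀ i : Fin n, ∑ s ∈ powersetCard k (univ : Finset (Fin n)),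
      ∑ j, (if i ∈ s ∧ j ∈ s then y i * y j else 0)
      = ∑ j, ∑ s ∈ powersetCard k (univ : Finset (Fin n)),
          (if i ∈ s ∧ j ∈ s then y i * y j else 0) := fun i => Finset.sum_comm
  simp only [h2]
  have h3 : ∀ i j : Fin n, ∑ s ∈ powersetCard k (univ : Finset (Fin n)),
      (if i ∈ s ∧ j ∈ s then y i * y j else 0)
      = (((powersetCard k (univ : Finset (Fin n))).filter (fun s => i ∈ s ∧ j ∈ s)).card : ℝ)
          * (y i * y j) := by
    intro i j
    rw [← Finset.sum_filter, Finset.sum_const, nsmul_eq_mul]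
  simp only [h3]
  have h4 : ∀ i j : Fin n,
      (((powersetCard k (univ : Finset (Fin n))).filter (fun s => i ∈ s ∧ j ∈ s)).card : ℝ)
      = if i = j then ((n - 1).choose (k - 1) : ℝ) else ((n - 2).choose (k - 2) : ℝ) := by
    intro i j
    by_cases h : i = j
    · subst h
      rw [if_pos rfl]
      simp only [and_self]
      exact_mod_cast card_filter_mem' (by omega) i
    · rw [if_neg h, card_filter_pair' hk i j h]
  simp only [h4]
  have h5 : ∀ i : Fin n, ∑ j, (if i = j then ((n - 1).choose (k - 1) : ℝ)
        else ((n - 2).choose (k - 2) : ℝ)) * (y i * y j)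
      = ((n - 1).choose (k - 1) : ℝ) * y i ^ 2
        + ((n - 2).choose (k - 2) : ℝ) * (y i * ∑ j, y j - y i ^ 2) := by
    intro i
    rw [← Finset.add_sum_erase _ _ (Finset.mem_univ i)]
    rw [if_pos rfl]
    have : ∀ j ∈ Finset.univ.erase i, (if i = j then ((n - 1).choose (k - 1) : ℝ)
        else ((n - 2).choose (k - 2) : ℝ)) * (y i * y j)
        = ((n - 2).choose (k - 2) : ℝ) * (y i * y j) := by
      intro j hj
      rw [if_neg (Ne.symm (Finset.mem_erase.1 hj).1)]
    rw [Finset.sum_congr rfl this, ← Finset.mul_sum, ← Finset.mul_sum,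
      Finset.sum_erase_eq_sub (Finset.mem_univ i)]
    ring
  rw [Finset.sum_congr rfl (fun i _ => h5 i)]
  rw [Finset.sum_add_distrib, ← Finset.mul_sum, ← Finset.mul_sum]
  congr 1
  rw [Finset.sum_sub_distrib, ← Finset.sum_mul, ← sq]

lemma sum_mem_subset (hk1 : 1 ≤ k) (g : Fin n → ℝ) :
    ∑ s ∈ powersetCard k (univ : Finset (Fin n)), ∑ i ∈ s, g i
      = ((n - 1).choose (k - 1) : ℝ) * ∑ i, g i := by
  have h1 : ∀ s : Finset (Fin n), ∑ i ∈ s, g i = ∑ i, if i ∈ s then g i else 0 := by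
    intro s
    symm
    simp [Finset.sum_ite_mem, Finset.univ_inter]
  rw [Finset.sum_congr rfl (fun s _ => h1 s), Finset.sum_comm]
  have h2 : ∀ i : Fin n, ∑ s ∈ powersetCard k (univ : Finset (Fin n)),
      (if i ∈ s then g i else 0)
      = ((n - 1).choose (k - 1) : ℝ) * g i := by
    intro i
    rw [← Finset.sum_filter, Finset.sum_const, nsmul_eq_mul]
    congr 1
    exact_mod_cast card_filter_mem' hk1 i
  rw [Finset.sum_congr rfl (fun i _ => h2 i), ← Finset.mul_sum]

lemma avg_sq_sum (hk : 0 < k) (s : Finset (Fin n)) (hs : s.card = k) (y : Fin n → ℝ) :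
    ∑ i, avgStep k s y i ^ 2
      = ∑ i, y i ^ 2 - ∑ i ∈ s, y i ^ 2 + (∑ j ∈ s, y j) ^ 2 / k := by
  have h1 : ∀ i, avgStep k s y i ^ 2
      = (if i ∈ s then ((∑ j ∈ s, y j) / k) ^ 2 - y i ^ 2 else 0) + y i ^ 2 := by
    intro i
    unfold avgStep
    by_cases h : i ∈ s <;> simp [h]
  rw [Finset.sum_congr rfl (fun i _ => h1 i), Finset.sum_add_distrib]
  have h2 : ∑ i, (if i ∈ s then ((∑ j ∈ s, y j) / k) ^ 2 - y i ^ 2 else 0)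
      = ∑ i ∈ s, (((∑ j ∈ s, y j) / k) ^ 2 - y i ^ 2) := by
    simp [Finset.sum_ite_mem, Finset.univ_inter]
  rw [h2, Finset.sum_sub_distrib, Finset.sum_const, hs, nsmul_eq_mul]
  have hk' : (k : ℝ) ≠ 0 := Nat.cast_ne_zero.2 hk.ne'
  field_simp
  ring

lemma avg_sum_eq (hk : 0 < k) (s : Finset (Fin n)) (hs : s.card = k) (y : Fin n → ℝ) :
    ∑ i, avgStep k s y i = ∑ i, y i := by
  have h1 : ∀ i, avgStep k s y i
      = (if i ∈ s then (∑ j ∈ s, y j) / k - y i else 0) + y i := by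
    intro i
    unfold avgStep
    by_cases h : i ∈ s <;> simp [h]
  rw [Finset.sum_congr rfl (fun i _ => h1 i), Finset.sum_add_distrib]
  have h2 : ∑ i, (if i ∈ s then (∑ j ∈ s, y j) / k - y i else 0)
      = ∑ i ∈ s, ((∑ j ∈ s, y j) / k - y i) := by
    simp [Finset.sum_ite_mem, Finset.univ_inter]
  have hk' : (k : ℝ) ≠ 0 := Nat.cast_ne_zero.2 hk.ne'
  rw [h2, Finset.sum_sub_distrib, Finset.sum_const, hs, nsmul_eq_mul]
  field_simp
  ring

lemma step_identity (hk : 2 ≤ k) (hn : k < n) (y : Fin n → ℝ) (hy : ∑ i, y i = 0) :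
    ∑ s : Finset (Fin n),
        (if s.card = k then ((n.choose k : ℝ))⁻¹ else 0) * ∑ i, avgStep k s y i ^ 2
      = (1 - ((k : ℝ) - 1) / ((n : ℝ) - 1)) * ∑ i, y i ^ 2 := by
  have hk0 : 0 < k := by omega
  have hP : (univ : Finset (Finset (Fin n))).filter (fun s => s.card = k)
      = powersetCard k (univ : Finset (Fin n)) := by
    ext s
    simp [Finset.mem_powersetCard]
  calc ∑ s : Finset (Fin n),
        (if s.card = k then ((n.choose k : ℝ))⁻¹ else 0) * ∑ i, avgStep k s y i ^ 2
      = ∑ s : Finset (Fin n),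
          (if s.card = k then ((n.choose k : ℝ))⁻¹ * ∑ i, avgStep k s y i ^ 2 else 0) := by
        apply Finset.sum_congr rfl
        intro s _
        by_cases h : s.card = k <;> simp [h]
    _ = ∑ s ∈ powersetCard k (univ : Finset (Fin n)),
          ((n.choose k : ℝ))⁻¹ * ∑ i, avgStep k s y i ^ 2 := by
        rw [← hP, Finset.sum_filter]
    _ = ((n.choose k : ℝ))⁻¹
          * ∑ s ∈ powersetCard k (univ : Finset (Fin n)), ∑ i, avgStep k s y i ^ 2 := by
        rw [Finset.mul_sum]
    _ = ((n.choose k : ℝ))⁻¹ * ((n.choose k : ℝ) * ∑ i, y i ^ 2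
          - ((n - 1).choose (k - 1) : ℝ) * ∑ i, y i ^ 2
          + (((n - 1).choose (k - 1) : ℝ) * ∑ i, y i ^ 2
              + ((n - 2).choose (k - 2) : ℝ) * (0 - ∑ i, y i ^ 2)) / k) := by
        congr 1
        have : ∀ s ∈ powersetCard k (univ : Finset (Fin n)), ∑ i, avgStep k s y i ^ 2
            = ∑ i, y i ^ 2 - ∑ i ∈ s, y i ^ 2 + (∑ j ∈ s, y j) ^ 2 / k := by
          intro s hs
          exact avg_sq_sum hk0 s (Finset.mem_powersetCard.1 hs).2 y
        rw [Finset.sum_congr rfl this]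
        rw [Finset.sum_add_distrib, Finset.sum_sub_distrib, Finset.sum_const,
          Finset.card_powersetCard, card_univ, Fintype.card_fin, nsmul_eq_mul,
          sum_mem_subset (by omega), ← Finset.sum_div, sum_sq_subset' hk, hy]
        ring_nf
    _ = (1 - ((k : ℝ) - 1) / ((n : ℝ) - 1)) * ∑ i, y i ^ 2 := by
        have hC : 0 < n.choose k := Nat.choose_pos hn.le
        have f1 : n * (n - 1).choose (k - 1) = n.choose k * k := by
          have := Nat.add_one_mul_choose_eq (n - 1) (k - 1)
          rw [show n - 1 + 1 = n by omega, show k - 1 + 1 = k by omega] at this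
          exact this
        have f2 : (n - 1) * (n - 2).choose (k - 2) = (n - 1).choose (k - 1) * (k - 1) := by
          have := Nat.add_one_mul_choose_eq (n - 2) (k - 2)
          rw [show n - 2 + 1 = n - 1 by omega, show k - 2 + 1 = k - 1 by omega] at this
          exact this
        have f1' : (n : ℝ) * ((n - 1).choose (k - 1) : ℝ) = (n.choose k : ℝ) * k := by
          exact_mod_cast congrArg (Nat.cast : ℕ → ℝ) f1
        have f2' : ((n : ℝ) - 1) * ((n - 2).choose (k - 2) : ℝ)
            = ((n - 1).choose (k - 1) : ℝ) * ((k : ℝ) - 1) := by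
          have := congrArg (Nat.cast : ℕ → ℝ) f2
          push_cast [Nat.cast_sub (by omega : 1 ≤ n), Nat.cast_sub (by omega : 1 ≤ k)] at this
          exact this
        have hC' : (n.choose k : ℝ) ≠ 0 := Nat.cast_ne_zero.2 hC.ne'
        have hn1 : (n : ℝ) - 1 ≠ 0 := by
          have : (1 : ℝ) < n := by exact_mod_cast (by omega : 1 < n)
          linarith
        have hk' : (k : ℝ) ≠ 0 := Nat.cast_ne_zero.2 hk0.ne'
        field_simp
        ring_nf
        linear_combination (∑ x : Fin n, y x ^ 2) * (1 - (k : ℝ)) * f1'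
          - (∑ x : Fin n, y x ^ 2) * f2'

end Comb

section Prob

variable {Ω : Type*} [MeasurableSpace Ω] {n k : ℕ}

lemma meas_avg_coord (k : ℕ) (s : Finset (Fin n)) {X : Ω → Fin n → ℝ} (hX : Measurable X)
    (i : Fin n) : Measurable (fun ω => avgStep k s (X ω) i) := by
  unfold avgStep
  by_cases h : i ∈ s
  · simp only [if_pos h]
    exact (Finset.measurable_sum s fun j _ => (measurable_pi_apply j).comp hX).div_const _
  · simp only [if_neg h]
    exact (measurable_pi_apply i).comp hX

lemma meas_proc (k : ℕ) (x0 : Fin n → ℝ) (A : ℕ → Ω → Finset (Fin n))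
    (hmeas : ∀ m, Measurable (A m)) : ∀ l, Measurable (fun ω => proc k x0 A ω l) := by
  intro l
  induction l with
  | zero => exact measurable_const
  | succ m ih =>
    apply measurable_pi_lambda
    intro i
    have key : (fun ω => proc k x0 A ω (m + 1) i)
        = fun ω => ∑ s : Finset (Fin n),
            if A m ω = s then avgStep k s (proc k x0 A ω m) i else 0 := by
      funext ω
      rw [Finset.sum_ite_eq]
      simp only [Finset.mem_univ, if_pos]
      rfl
    rw [key]
    refine Finset.measurable_sum _ fun s _ => Measurable.ite ?_ (meas_avg_coord k s ih i)
      measurable_const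
    exact hmeas m (MeasurableSet.singleton s)

lemma proc_congr (k : ℕ) (x0 : Fin n → ℝ) {Ω' : Type*} (A : ℕ → Ω → Finset (Fin n))
    (B : ℕ → Ω' → Finset (Fin n)) (ω : Ω) (ω' : Ω') :
    ∀ l, (∀ m, m < l → A m ω = B m ω') → proc k x0 A ω l = proc k x0 B ω' l := by
  intro l
  induction l with
  | zero => intro _; rfl
  | succ m ih =>
    intro h
    show avgStep _ _ _ = avgStep _ _ _
    rw [h m (Nat.lt_succ_self m), ih (fun j hj => h j (Nat.lt_succ_of_lt hj))]

lemma avg_bound (hk : 0 < k) (hn : 0 < n) {C : ℝ} (hC0 : 0 ≤ C) {y : Fin n → ℝ}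
    (hy : ∀ i, |y i| ≤ C) (s : Finset (Fin n)) (i : Fin n) :
    |avgStep k s y i| ≤ n * C := by
  have hn1 : (1 : ℝ) ≤ n := by exact_mod_cast hn
  unfold avgStep
  by_cases h : i ∈ s
  · simp only [if_pos h]
    rw [abs_div]
    have h1 : |∑ j ∈ s, y j| ≤ n * C := by
      refine (Finset.abs_sum_le_sum_abs _ _).trans ?_
      refine (Finset.sum_le_sum fun j _ => hy j).trans ?_
      rw [Finset.sum_const, nsmul_eq_mul]
      have : (s.card : ℝ) ≤ n := by
        exact_mod_cast (Finset.card_le_card (Finset.subset_univ _)).trans_eq (by simp)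
      nlinarith
    have hk1 : (1 : ℝ) ≤ |(k : ℝ)| := by
      rw [abs_of_nonneg (by positivity)]
      exact_mod_cast hk
    calc |∑ j ∈ s, y j| / |(k : ℝ)|
        ≤ (n * C) / |(k : ℝ)| := div_le_div_of_nonneg_right h1 (by linarith) |>.trans_eq rfl
      _ ≤ (n * C) / 1 := div_le_div_of_nonneg_left (by positivity) (by norm_num) hk1
      _ = n * C := by rw [div_one]
  · simp only [if_neg h]
    calc |y i| ≤ C := hy i
      _ ≤ n * C := by nlinarith

lemma proc_bound (k : ℕ) (hk : 0 < k) (hn : 0 < n) (x0 : Fin n → ℝ)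
    (A : ℕ → Ω → Finset (Fin n)) :
    ∀ l, ∃ C : ℝ, 0 ≤ C ∧ ∀ ω i, |proc k x0 A ω l i| ≤ C := by
  intro l
  induction l with
  | zero =>
    refine ⟨∑ j, |x0 j|, Finset.sum_nonneg fun j _ => abs_nonneg _, fun ω i => ?_⟩
    exact Finset.single_le_sum (f := fun j => |x0 j|) (fun j _ => abs_nonneg _) (Finset.mem_univ i)
  | succ m ih =>
    obtain ⟨C, hC0, hC⟩ := ih
    refine ⟨n * C, by positivity, fun ω i => ?_⟩
    exact avg_bound hk hn hC0 (hC ω) (A m ω) i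

end Prob

/-- For the `k`-averaging process started from a mean-zero vector,
`E[S_n(l)] = (1 - (k-1)/(n-1))^l · S_n(0)`. -/
theorem averaging_expected_sq_sum_decay
    (n k : ℕ) (hk : 2 ≤ k) (hn : k < n)
    (Ω : Type*) [MeasurableSpace Ω]
    (μ : Measure Ω) [IsProbabilityMeasure μ]
    (A : ℕ → Ω → Finset (Fin n))
    (hmeas : ∀ m, Measurable (A m))
    (hindep : iIndepFun A μ)
    (hunif : ∀ (m : ℕ) (s : Finset (Fin n)),
      μ (A m ⁻¹' {s}) = if s.card = k then ((n.choose k : ENNReal))⁻¹ else 0)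
    (x0 : Fin n → ℝ) (hx0 : ∑ i, x0 i = 0) (l : ℕ) :
    ∫ ω, (∑ i, (proc k x0 A ω l i) ^ 2) ∂μ
      = (1 - ((k : ℝ) - 1) / ((n : ℝ) - 1)) ^ l * ∑ i, (x0 i) ^ 2 := by
  have hk0 : 0 < k := by omega
  have hn0 : 0 < n := by omega
  -- almost surely all chosen sets have cardinality k
  have hcard : ∀ᵐ ω ∂μ, ∀ m, (A m ω).card = k := by
    rw [ae_all_iff]
    intro m
    rw [ae_iff]
    have hsub : {ω | ¬ (A m ω).card = k}
        ⊆ ⋃ s ∈ {s : Finset (Fin n) | s.card ≠ k}, A m ⁻¹' {s} := by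
      intro ω hω
      exact Set.mem_biUnion hω rfl
    refine measure_mono_null hsub ?_
    refine (measure_biUnion_null_iff (Set.to_countable _)).2 ?_
    intro s hs
    rw [hunif m s, if_neg hs]
  -- almost surely the coordinate sum stays zero
  have hsum : ∀ᵐ ω ∂μ, ∀ l', ∑ i, proc k x0 A ω l' i = 0 := by
    filter_upwards [hcard] with ω hω
    intro l'
    induction l' with
    | zero => exact hx0
    | succ m ih =>
      show ∑ i, avgStep k (A m ω) (proc k x0 A ω m) i = 0
      rw [avg_sum_eq hk0 _ (hω m), ih]
  induction l with
  | zero =>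
    show ∫ _ω, (∑ i, (x0 i) ^ 2) ∂μ = _
    simp [integral_const]
  | succ m ih =>
    set τ : ℝ := 1 - ((k : ℝ) - 1) / ((n : ℝ) - 1) with hτ
    set X : Ω → Fin n → ℝ := fun ω => proc k x0 A ω m with hXdef
    have hXmeas : Measurable X := meas_proc k x0 A hmeas m
    obtain ⟨C, hC0, hC⟩ := proc_bound k hk0 hn0 x0 A m
    have hgmeas : ∀ s : Finset (Fin n),
        Measurable (fun ω => ∑ i, avgStep k s (X ω) i ^ 2) :=
      fun s => Finset.measurable_sum _ fun i _ => (meas_avg_coord k s hXmeas i).pow_const 2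
    have hg_bd : ∀ (s : Finset (Fin n)) ω,
        |∑ i, avgStep k s (X ω) i ^ 2| ≤ n * (n * C) ^ 2 := by
      intro s ω
      refine (Finset.abs_sum_le_sum_abs _ _).trans ?_
      have : ∀ i : Fin n, |avgStep k s (X ω) i ^ 2| ≤ (n * C) ^ 2 := by
        intro i
        rw [abs_pow]
        exact pow_le_pow_left₀ (abs_nonneg _) (avg_bound hk0 hn0 hC0 (hC ω) s i) 2
      refine (Finset.sum_le_sum fun i _ => this i).trans ?_
      rw [Finset.sum_const, nsmul_eq_mul, Finset.card_univ, Fintype.card_fin]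
    have hInt : ∀ s : Finset (Fin n),
        Integrable (fun ω => ∑ i, avgStep k s (X ω) i ^ 2) μ := by
      intro s
      refine Integrable.mono' (integrable_const (n * (n * C) ^ 2))
        (hgmeas s).aestronglyMeasurable (ae_of_all _ fun ω => ?_)
      simpa [Real.norm_eq_abs] using hg_bd s ω
    have hindmeas : ∀ s : Finset (Fin n),
        Measurable (fun ω => if A m ω = s then (1 : ℝ) else 0) :=
      fun s => Measurable.ite (hmeas m (MeasurableSet.singleton s)) measurable_const
        measurable_const
    -- independence of the m-th choice from the process at time m
    have hTup := hindep.indepFun_finset {m} (Finset.range m)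
      (by simp [Finset.disjoint_left]) hmeas
    have hXrep : X = (fun g : (↥(Finset.range m) → Finset (Fin n)) =>
          proc k x0 (fun j (_ : Unit) => if hj : j ∈ Finset.range m then g ⟨j, hj⟩ else ∅) () m)
        ∘ (fun ω (i : ↥(Finset.range m)) => A (i : ℕ) ω) := by
      funext ω
      apply proc_congr
      intro j hj
      rw [dif_pos (Finset.mem_range.2 hj)]
    have hIndepXA : IndepFun (A m) X μ := by
      have hArep : A m = (fun g : (↥({m} : Finset ℕ) → Finset (Fin n)) =>
          g ⟨m, Finset.mem_singleton_self m⟩)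
          ∘ (fun ω (i : ↥({m} : Finset ℕ)) => A (i : ℕ) ω) := rfl
      rw [hArep, hXrep]
      exact hTup.comp (measurable_pi_apply _) (measurable_of_countable _)
    have hIndep_s : ∀ s : Finset (Fin n),
        IndepFun (fun ω => if A m ω = s then (1 : ℝ) else 0)
          (fun ω => ∑ i, avgStep k s (X ω) i ^ 2) μ := by
      intro s
      exact hIndepXA.comp (φ := fun t : Finset (Fin n) => if t = s then (1 : ℝ) else 0)
        (ψ := fun x : Fin n → ℝ => ∑ i, avgStep k s x i ^ 2)
        (measurable_of_countable _)
        (Finset.measurable_sum _ fun i _ => (meas_avg_coord k s measurable_id i).pow_const 2)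
    have hdecomp : ∀ ω, ∑ s : Finset (Fin n),
          (if A m ω = s then (1 : ℝ) else 0) * (∑ i, avgStep k s (X ω) i ^ 2)
        = ∑ i, proc k x0 A ω (m + 1) i ^ 2 := by
      intro ω
      simp only [ite_mul, one_mul, zero_mul]
      rw [Finset.sum_ite_eq]
      simp only [Finset.mem_univ, if_pos]
      rfl
    have hprodInt : ∀ s : Finset (Fin n), Integrable
        (fun ω => (if A m ω = s then (1 : ℝ) else 0) * (∑ i, avgStep k s (X ω) i ^ 2)) μ := by
      intro s
      refine Integrable.mono' (integrable_const (n * (n * C) ^ 2))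
        (((hindmeas s).mul (hgmeas s)).aestronglyMeasurable) (ae_of_all _ fun ω => ?_)
      rw [Real.norm_eq_abs, abs_mul]
      have h1 : |if A m ω = s then (1 : ℝ) else 0| ≤ 1 := by
        by_cases h : A m ω = s <;> simp [h]
      have h2 := hg_bd s ω
      have h3 : (0:ℝ) ≤ n * (n * C) ^ 2 := by positivity
      nlinarith [abs_nonneg (∑ i, avgStep k s (X ω) i ^ 2)]
    have hindint : ∀ s : Finset (Fin n),
        ∫ ω, (if A m ω = s then (1 : ℝ) else 0) ∂μ
          = (if s.card = k then ((n.choose k : ℝ))⁻¹ else 0) := by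
      intro s
      have : (fun ω => if A m ω = s then (1 : ℝ) else 0)
          = Set.indicator (A m ⁻¹' {s}) 1 := by
        funext ω
        by_cases h : A m ω = s
        · simp [Set.indicator, h]
        · simp [Set.indicator, h]
      rw [this, integral_indicator_one (hmeas m (MeasurableSet.singleton s)), measureReal_def, hunif m s]
      by_cases h : s.card = k
      · simp [h, ENNReal.toReal_inv]
      · simp [h]
    calc ∫ ω, (∑ i, (proc k x0 A ω (m + 1) i) ^ 2) ∂μ
        = ∫ ω, ∑ s : Finset (Fin n),
            (if A m ω = s then (1 : ℝ) else 0) * (∑ i, avgStep k s (X ω) i ^ 2) ∂μ := by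
          exact integral_congr_ae (ae_of_all _ fun ω => (hdecomp ω).symm)
      _ = ∑ s : Finset (Fin n), ∫ ω,
            (if A m ω = s then (1 : ℝ) else 0) * (∑ i, avgStep k s (X ω) i ^ 2) ∂μ :=
          integral_finset_sum _ fun s _ => hprodInt s
      _ = ∑ s : Finset (Fin n), (if s.card = k then ((n.choose k : ℝ))⁻¹ else 0)
            * ∫ ω, (∑ i, avgStep k s (X ω) i ^ 2) ∂μ := by
          refine Finset.sum_congr rfl fun s _ => ?_
          have hI : Integrable (fun ω => if A m ω = s then (1 : ℝ) else 0) μ := by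
            refine Integrable.mono' (integrable_const 1)
              (hindmeas s).aestronglyMeasurable (ae_of_all _ fun ω => ?_)
            rw [Real.norm_eq_abs]
            by_cases h : A m ω = s <;> simp [h]
          rw [show (fun ω => (if A m ω = s then (1 : ℝ) else 0)
              * (∑ i, avgStep k s (X ω) i ^ 2))
              = (fun ω => if A m ω = s then (1 : ℝ) else 0)
                * (fun ω => ∑ i, avgStep k s (X ω) i ^ 2) from rfl,
            (hIndep_s s).integral_mul_eq_mul_integral hI.aestronglyMeasurable (hInt s).aestronglyMeasurable, hindint s]
      _ = ∫ ω, ∑ s : Finset (Fin n), (if s.card = k then ((n.choose k : ℝ))⁻¹ else 0)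
            * (∑ i, avgStep k s (X ω) i ^ 2) ∂μ := by
          rw [integral_finset_sum _ fun s _ => (hInt s).const_mul _]
          exact Finset.sum_congr rfl fun s _ => (integral_const_mul _ _).symm
      _ = ∫ ω, τ * ∑ i, X ω i ^ 2 ∂μ := by
          refine integral_congr_ae ?_
          filter_upwards [hsum] with ω hω
          exact step_identity hk hn (X ω) (hω m)
      _ = τ * ∫ ω, ∑ i, X ω i ^ 2 ∂μ := integral_const_mul τ _
      _ = τ ^ (m + 1) * ∑ i, (x0 i) ^ 2 := by
          rw [hXdef]
          show τ * ∫ ω, (∑ i, (proc k x0 A ω m i) ^ 2) ∂μ = _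
          rw [ih, pow_succ]
          ring

end
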